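/- Let V be a finite ground set, f : 2^V → ℝ a normalized submodular set function, and X ⊆ V. Define m^f_{X,1}(Y) = f(X) − Σ_{j ∈ X∖Y} f(j | X∖{j}) + Σ_{j ∈ Y∖X} f({j}). Then m^f_{X,1}(Y) ≥ f(Y) for every Y ⊆ V, and m^f_{X,1}(X) = f(X). (That is, m^f_{X,1} is a modular upper bound of f that is tight at X.) -/

import Mathlib

private lemma lemA {V : Type*} [DecidableEq V]
    (f : Finset V → ℝ)
    (hsub : ∀ S T : Finset V, f (S ∪ T) + f (S ∩ T) ≤ f S + f T)
    (hnorm : f ∅ = 0)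
    (A : Finset V) :
    ∀ D : Finset V, Disjoint A D → f (A ∪ D) ≤ f A + ∑ j ∈ D, f {j} := by
  intro D
  induction D using Finset.induction_on with
  | empty => simp
  | insert _ _ hjD =>
    rename_i j D ih
    intro hdisj
    rw [Finset.disjoint_insert_right] at hdisj
    have hD := ih hdisj.2
    have hj : j ∉ A ∪ D := by simp [hjD, hdisj.1]
    have step : f ((A ∪ D) ∪ {j}) ≤ f (A ∪ D) + f {j} := by
      have := hsub (A ∪ D) {j}
      have hint : (A ∪ D) ∩ {j} = ∅ := by
        rw [Finset.eq_empty_iff_forall_notMem]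
        intro x hx
        simp only [Finset.mem_inter, Finset.mem_singleton] at hx
        exact hj (hx.2 ▸ hx.1)
      rw [hint, hnorm] at this
      linarith
    have heq : A ∪ insert j D = (A ∪ D) ∪ {j} := by
      ext x; simp [or_comm, or_assoc, or_left_comm]
    rw [heq, Finset.sum_insert hjD]
    linarith

private lemma lemB {V : Type*} [DecidableEq V]
    (f : Finset V → ℝ)
    (hsub : ∀ S T : Finset V, f (S ∪ T) + f (S ∩ T) ≤ f S + f T)
    (X : Finset V) :
    ∀ D : Finset V, D ⊆ X →
      f (X \ D) ≤ f X - ∑ j ∈ D, (f X - f (X \ {j})) := by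
  intro D
  induction D using Finset.induction_on with
  | empty => simp
  | insert _ _ hjD =>
    rename_i j D ih
    intro hsubX
    have hjX : j ∈ X := hsubX (Finset.mem_insert_self j D)
    have hDX : D ⊆ X := fun x hx => hsubX (Finset.mem_insert_of_mem hx)
    have hD := ih hDX
    -- step: f((X\D)\{j}) ≤ f(X\D) - (f X - f (X\{j}))
    have step : f ((X \ D) \ {j}) ≤ f (X \ D) - (f X - f (X \ {j})) := by
      have h := hsub (X \ D) (X \ {j})
      have hu : (X \ D) ∪ (X \ {j}) = X := by
        ext x
        simp only [Finset.mem_union, Finset.mem_sdiff, Finset.mem_singleton]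
        constructor
        · rintro (h | h) <;> exact h.1
        · intro hx
          by_cases hxj : x = j
          · left; exact ⟨hx, fun hxD => hjD (hxj ▸ hxD)⟩
          · right; exact ⟨hx, hxj⟩
      have hi : (X \ D) ∩ (X \ {j}) = (X \ D) \ {j} := by
        ext x
        simp only [Finset.mem_inter, Finset.mem_sdiff, Finset.mem_singleton]
        tauto
      rw [hu, hi] at h
      linarith
    have heq : X \ insert j D = (X \ D) \ {j} := by
      ext x
      simp only [Finset.mem_sdiff, Finset.mem_insert, Finset.mem_singleton]
      tauto
    rw [heq, Finset.sum_insert hjD]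
    linarith

/-- The modular function `m^f_{X,1}` is an upper bound of the
normalized submodular function `f`, tight at `X`. -/
theorem modular_upper_bound_one
    {V : Type*} [Fintype V] [DecidableEq V]
    (f : Finset V → ℝ)
    (hsub : ∀ S T : Finset V, f (S ∪ T) + f (S ∩ T) ≤ f S + f T)
    (hnorm : f ∅ = 0)
    (X : Finset V)
    (m : Finset V → ℝ)
    (hm : ∀ Y : Finset V, m Y =
      f X - ∑ j ∈ X \ Y, (f ((X \ {j}) ∪ {j}) - f (X \ {j}))
          + ∑ j ∈ Y \ X, f {j}) :
    (∀ Y : Finset V, f Y ≤ m Y) ∧ m X = f X := by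
  constructor
  · intro Y
    rw [hm Y]
    have hsum : ∑ j ∈ X \ Y, (f ((X \ {j}) ∪ {j}) - f (X \ {j}))
        = ∑ j ∈ X \ Y, (f X - f (X \ {j})) := by
      apply Finset.sum_congr rfl
      intro j hj
      have hjX : j ∈ X := (Finset.mem_sdiff.mp hj).1
      have : (X \ {j}) ∪ {j} = X := by
        ext x
        simp only [Finset.mem_union, Finset.mem_sdiff, Finset.mem_singleton]
        constructor
        · rintro (h | h); · exact h.1
          · exact h ▸ hjX
        · intro hx; by_cases hxj : x = j
          · right; exact hxj
          · left; exact ⟨hx, hxj⟩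
      rw [this]
    rw [hsum]
    have h1 : f (X \ (X \ Y)) ≤ f X - ∑ j ∈ X \ Y, (f X - f (X \ {j})) :=
      lemB f hsub X (X \ Y) (Finset.sdiff_subset)
    have h2 : f ((X ∩ Y) ∪ (Y \ X)) ≤ f (X ∩ Y) + ∑ j ∈ Y \ X, f {j} :=
      lemA f hsub hnorm (X ∩ Y) (Y \ X)
        (Finset.disjoint_left.mpr fun x hx hx' =>
          (Finset.mem_sdiff.mp hx').2 (Finset.mem_inter.mp hx).1)
    have hXY : X \ (X \ Y) = X ∩ Y := Finset.sdiff_sdiff_self_left X Y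
    have hY : (X ∩ Y) ∪ (Y \ X) = Y := by
      ext x
      simp only [Finset.mem_union, Finset.mem_inter, Finset.mem_sdiff]
      tauto
    rw [hXY] at h1
    rw [hY] at h2
    linarith
  · rw [hm X]; simp
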